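/- Every point of the line L = {(η₁,η₂,η₃;ξ) = (-η, η, η; 0) : η ∈ ℝ} is a space-time resonance for the quartic gBBM phase: the phase φ(η₁,η₂,η₃;ξ) = -ω(ξ) + ω(η₁) + ω(η₂) + ω(η₃) + ω(ξ-η₁-η₂-η₃) vanishes on L and the gradient ∇_{η₁,η₂,η₃}φ vanishes on L, where ω(ξ) = ξ/(1+ξ²). -/

import Mathlib

noncomputable def ω : ℝ → ℝ := fun ξ => ξ / (1 + ξ^2)

noncomputable def φ (η₁ η₂ η₃ ξ : ℝ) : ℝ :=
  -ω ξ + ω η₁ + ω η₂ + ω η₃ + ω (ξ - η₁ - η₂ - η₃)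

lemma omega_hasDerivAt (x : ℝ) :
    HasDerivAt ω ((1 - x^2) / (1 + x^2)^2) x := by
  have hne : (1 + x^2) ≠ 0 := by positivity
  have h := (hasDerivAt_id x).div
    ((hasDerivAt_const x (1:ℝ)).add (hasDerivAt_pow 2 x)) hne
  refine h.congr_deriv ?_
  simp only [id_eq, Pi.add_apply]
  ring

theorem bbm_resonant_line :
    ∀ η : ℝ,
      φ (-η) η η 0 = 0 ∧
      deriv (fun t => φ t η η 0) (-η) = 0 ∧
      deriv (fun t => φ (-η) t η 0) η = 0 ∧
      deriv (fun t => φ (-η) η t 0) η = 0 := by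
  intro η
  have hωneg : ∀ x : ℝ, ω (-x) = -ω x := by
    intro x; simp [ω]; ring_nf
  refine ⟨?_, ?_, ?_, ?_⟩
  · simp only [φ]
    have : (0 : ℝ) - (-η) - η - η = -η := by ring
    rw [this, hωneg]
    simp [ω]
  · have h1 := omega_hasDerivAt (-η)
    have hinner : HasDerivAt (fun t : ℝ => 0 - t - η - η) (-1) (-η) := by
      simpa using ((hasDerivAt_id (-η)).const_sub (0:ℝ)).sub_const η |>.sub_const η
    have h2 : HasDerivAt (fun t : ℝ => ω (0 - t - η - η))
        (((1 - ((0:ℝ) - (-η) - η - η)^2) / (1 + ((0:ℝ) - (-η) - η - η)^2)^2) * (-1)) (-η) :=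
      (omega_hasDerivAt _).comp _ hinner
    have H : HasDerivAt (fun t => φ t η η 0) 0 (-η) := by
      have := ((((hasDerivAt_const (-η) (-ω 0)).add h1).add_const (ω η)).add_const
        (ω η)).add h2
      refine this.congr_deriv ?_
      have e : (0:ℝ) - (-η) - η - η = -η := by ring
      rw [e]; ring_nf
    exact H.deriv
  · have h1 := omega_hasDerivAt η
    have hinner : HasDerivAt (fun t : ℝ => 0 - (-η) - t - η) (-1) η := by
      simpa using ((hasDerivAt_id η).const_sub ((0:ℝ) - (-η))).sub_const η
    have h2 : HasDerivAt (fun t : ℝ => ω (0 - (-η) - t - η))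
        (((1 - ((0:ℝ) - (-η) - η - η)^2) / (1 + ((0:ℝ) - (-η) - η - η)^2)^2) * (-1)) η :=
      (omega_hasDerivAt _).comp _ hinner
    have H : HasDerivAt (fun t => φ (-η) t η 0) 0 η := by
      have := ((((hasDerivAt_const η (-ω 0)).add_const (ω (-η))).add h1).add_const
        (ω η)).add h2
      refine this.congr_deriv ?_
      have e : (0:ℝ) - (-η) - η - η = -η := by ring
      rw [e]; ring_nf
    exact H.deriv
  · have h1 := omega_hasDerivAt η
    have hinner : HasDerivAt (fun t : ℝ => 0 - (-η) - η - t) (-1) η := by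
      simpa using (hasDerivAt_id η).const_sub ((0:ℝ) - (-η) - η)
    have h2 : HasDerivAt (fun t : ℝ => ω (0 - (-η) - η - t))
        (((1 - ((0:ℝ) - (-η) - η - η)^2) / (1 + ((0:ℝ) - (-η) - η - η)^2)^2) * (-1)) η :=
      (omega_hasDerivAt _).comp _ hinner
    have H : HasDerivAt (fun t => φ (-η) η t 0) 0 η := by
      have := ((((hasDerivAt_const η (-ω 0)).add_const (ω (-η))).add_const (ω η)).add
        h1).add h2
      refine this.congr_deriv ?_
      have e : (0:ℝ) - (-η) - η - η = -η := by ring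
      rw [e]; ring_nf
    exact H.deriv
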